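/- arXiv:2504.13584 — 2 statements merged into one kernel-verified Lean document; each statement's English description precedes it below -/
import Mathlib

section
/- Let τ be a primitive substitution whose level-2 induced substitution τ₂ (on the alphabet of length-2 factors of the fixed point) has characteristic polynomial X^m · P_θ(X) for a Pisot number θ and some m ≥ 0. Then the characteristic polynomial of τ itself equals X^ℓ · P_θ(X) for some 0 ≤ ℓ ≤ m; in particular τ is ultimately Pisot with the same Pisot root. -/
/-- A Pisot number: a real algebraic integer greater than 1, all of whose other complex
conjugates have modulus strictly less than 1. -/
def IsPisot (θ : ℝ) : Prop :=
  1 < θ ∧ IsIntegral ℤ θ ∧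
    ∀ z : ℂ, ((minpoly ℤ θ).map (Int.castRingHom ℂ)).IsRoot z → z ≠ (θ : ℂ) →
      ‖z‖ < 1

/-- The incidence matrix of a substitution `τ` (over `ℤ`). -/
def incidence {B : Type*} [Fintype B] [DecidableEq B] (τ : B → List B) : Matrix B B ℤ :=
  Matrix.of fun a b => ((τ a).count b : ℤ)

open Polynomial Matrix

lemma my_charpoly_conj {n : Type*} [Fintype n] [DecidableEq n] (T Ti N : Matrix n n ℤ)
    (h1 : Ti * T = 1) : (Ti * N * T).charpoly = N.charpoly := by
  have hTT : (Ti.map C) * (T.map C) = 1 := by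
    rw [← Matrix.map_mul, h1, Matrix.map_one _ (map_zero _) (map_one _)]
  have hch : Matrix.charmatrix (Ti * N * T) =
      Ti.map C * Matrix.charmatrix N * T.map C := by
    unfold Matrix.charmatrix
    rw [Matrix.mul_sub, Matrix.sub_mul]
    congr 1
    · rw [← (Matrix.scalar_commute (X : ℤ[X]) (fun r => mul_comm _ _) (Ti.map C)).eq,
        mul_assoc, hTT, mul_one]
    · simp only [RingHom.mapMatrix_apply, Matrix.map_mul]
  unfold Matrix.charpoly
  rw [hch, Matrix.det_mul, Matrix.det_mul, mul_comm ((Ti.map C).det) _, mul_assoc,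
    ← Matrix.det_mul, hTT, Matrix.det_one, mul_one]

lemma my_charpoly_zero {n : Type*} [Fintype n] [DecidableEq n] :
    (0 : Matrix n n ℤ).charpoly = X ^ (Fintype.card n) := by
  unfold Matrix.charpoly Matrix.charmatrix
  simp [Matrix.scalar, Matrix.smul_one_eq_diagonal, Matrix.det_diagonal]

/-- Let `τ` be a primitive substitution and `τ₂` the induced substitution on the alphabet
of length-2 factors of its fixed point (the structural relation being recorded by the
first-letter projection `π` and the counting identity `hrel`). If the characteristic
polynomial of `τ₂` is `X^m · P_θ(X)` for a Pisot number `θ`, then the characteristic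
polynomial of `τ` is `X^ℓ · P_θ(X)` for some `ℓ ≤ m`; in particular `τ` is ultimately
Pisot with the same Pisot root. -/
theorem charpoly_of_primitive_of_block2_ultimately_pisot
    {A A₂ : Type*} [Fintype A] [DecidableEq A] [Fintype A₂] [DecidableEq A₂]
    (τ : A → List A) (τ₂ : A₂ → List A₂) (π : A₂ → A)
    (hsurj : Function.Surjective π)
    (hrel : ∀ (i : A₂) (m : A),
      ∑ j ∈ Finset.univ.filter (fun j => π j = m), (τ₂ i).count j = (τ (π i)).count m)
    (hprim : ∃ n : ℕ, ∀ a b : A, 0 < ((incidence τ) ^ n) a b)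
    (θ : ℝ) (hθ : IsPisot θ) (m : ℕ)
    (h₂ : (incidence τ₂).charpoly = Polynomial.X ^ m * minpoly ℤ θ) :
    ∃ ℓ ≤ m, (incidence τ).charpoly = Polynomial.X ^ ℓ * minpoly ℤ θ := by
  classical
  set p : ℤ[X] := minpoly ℤ θ with hp_def
  have hθint : IsIntegral ℤ θ := hθ.2.1
  have hp_monic : p.Monic := minpoly.monic hθint
  have hp_ne : p ≠ 0 := hp_monic.ne_zero
  have hp_irr : Irreducible p := minpoly.irreducible hθint
  have hp_prime : Prime p := hp_irr.prime
  set M : Matrix A A ℤ := incidence τ with hM_def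
  set M₂ : Matrix A₂ A₂ ℤ := incidence τ₂ with hM₂_def
  set q : ℤ[X] := M.charpoly with hq_def
  have hq_monic : q.Monic := Matrix.charpoly_monic M
  -- basic cardinalities
  have hpdeg : 0 < p.natDegree := minpoly.natDegree_pos hθint
  have hcard₂ : Fintype.card A₂ = m + p.natDegree := by
    have := Matrix.charpoly_natDegree_eq_dim M₂
    rw [h₂, Polynomial.natDegree_mul (pow_ne_zero _ Polynomial.X_ne_zero) hp_ne,
      natDegree_X_pow] at this
    omega
  have hA₂ : Nonempty A₂ := Fintype.card_pos_iff.mp (by omega)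
  have hA : Nonempty A := ⟨π hA₂.some⟩
  -- section of π
  set s : A → A₂ := Function.surjInv hsurj with hs_def
  have hπs : ∀ a, π (s a) = a := fun a => Function.surjInv_eq hsurj a
  have hs_inj : Function.Injective s := Function.injective_surjInv hsurj
  set R' := ↥((Set.range s)ᶜ) with hR'_def
  set e : (A ⊕ R') ≃ A₂ :=
    ((Equiv.ofInjective s hs_inj).sumCongr (Equiv.refl R')).trans
      (Equiv.Set.sumCompl (Set.range s)) with he_def
  have he1 : ∀ a : A, e (Sum.inl a) = s a := by
    intro a
    simp only [he_def, Equiv.trans_apply, Equiv.sumCongr_apply, Sum.map_inl]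
    exact Equiv.Set.sumCompl_apply_inl (Set.range s) _
  have he2 : ∀ r : R', e (Sum.inr r) = (r : A₂) := by
    intro r
    simp only [he_def, Equiv.trans_apply, Equiv.sumCongr_apply, Sum.map_inr, Equiv.refl_apply]
    exact Equiv.Set.sumCompl_apply_inr (Set.range s) _
  -- key counting identity
  have hkey : ∀ (i : A₂) (b : A),
      M₂ i (s b) + ∑ r : R', (if π (r : A₂) = b then M₂ i (r : A₂) else 0)
        = ((τ (π i)).count b : ℤ) := by
    intro i b
    have h0 : (∑ j ∈ Finset.univ.filter (fun j => π j = b), ((τ₂ i).count j : ℤ))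
        = ((τ (π i)).count b : ℤ) := by exact_mod_cast hrel i b
    have h1 : ∑ j ∈ Finset.univ.filter (fun j => π j = b), ((τ₂ i).count j : ℤ)
        = ∑ j : A₂, (if π j = b then M₂ i j else 0) := by
      rw [Finset.sum_filter]; rfl
    rw [h1] at h0
    rw [← Equiv.sum_comp e (fun j => if π j = b then M₂ i j else 0)] at h0
    rw [Fintype.sum_sum_type] at h0
    simp only [he1, he2, hπs] at h0
    rw [Finset.sum_ite_eq' Finset.univ b (fun a => M₂ i (s a))] at h0
    simpa using h0
  -- blocks of the reindexed matrix
  set B : Matrix A A ℤ := Matrix.of (fun a b => M₂ (s a) (s b)) with hB_def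
  set Cm : Matrix A R' ℤ := Matrix.of (fun a r => M₂ (s a) (r : A₂)) with hC_def
  set D : Matrix R' A ℤ := Matrix.of (fun r b => M₂ (r : A₂) (s b)) with hD_def
  set E : Matrix R' R' ℤ := Matrix.of (fun r r' => M₂ (r : A₂) (r' : A₂)) with hE_def
  set P' : Matrix R' A ℤ := Matrix.of (fun r a => if π (r : A₂) = a then 1 else 0) with hP_def
  set N : Matrix (A ⊕ R') (A ⊕ R') ℤ := Matrix.reindex e.symm e.symm M₂ with hN_def
  have hN : N = Matrix.fromBlocks B Cm D E := by
    ext x y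
    cases x <;> cases y <;>
      simp [hN_def, Matrix.reindex_apply, Matrix.submatrix_apply, he1, he2,
        hB_def, hC_def, hD_def, hE_def]
  have h1 : B + Cm * P' = M := by
    ext a b
    have hk := hkey (s a) b
    rw [hπs a] at hk
    simp only [Matrix.add_apply, Matrix.mul_apply, hB_def, hC_def, hP_def, Matrix.of_apply,
      mul_ite, mul_one, mul_zero]
    exact hk
  have h2 : D + E * P' = P' * M := by
    ext r b
    have hk := hkey (r : A₂) b
    simp only [Matrix.add_apply, Matrix.mul_apply, hD_def, hE_def, hP_def, Matrix.of_apply,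
      mul_ite, mul_one, mul_zero, ite_mul, zero_mul, one_mul]
    rw [Finset.sum_ite_eq Finset.univ (π (r : A₂)) (fun a => M a b), if_pos (Finset.mem_univ _)]
    exact hk
  set T : Matrix (A ⊕ R') (A ⊕ R') ℤ := Matrix.fromBlocks 1 0 P' 1 with hT_def
  set Ti : Matrix (A ⊕ R') (A ⊕ R') ℤ := Matrix.fromBlocks 1 0 (-P') 1 with hTi_def
  have hTiT : Ti * T = 1 := by
    rw [hTi_def, hT_def, Matrix.fromBlocks_multiply]
    simp
  have hconj : M₂.charpoly = q * (E - P' * Cm).charpoly := by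
    have hre : N.charpoly = M₂.charpoly := Matrix.charpoly_reindex e.symm M₂
    have hb : Ti * N * T = Matrix.fromBlocks M Cm 0 (E - P' * Cm) := by
      rw [hN, hTi_def, hT_def, Matrix.fromBlocks_multiply, Matrix.fromBlocks_multiply]
      simp only [Matrix.one_mul, Matrix.mul_one, Matrix.zero_mul, Matrix.mul_zero,
        add_zero, zero_add, Matrix.neg_mul, Matrix.add_mul, Matrix.mul_assoc]
      have hll : -(P' * B) + D + (-(P' * (Cm * P')) + E * P') = (0 : Matrix R' A ℤ) := by
        have e2 : -(P' * B) + D + (-(P' * (Cm * P')) + E * P')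
            = (D + E * P') - (P' * B + P' * (Cm * P')) := by abel
        rw [e2, h2, ← Matrix.mul_add, h1, sub_self]
      rw [h1, hll, neg_add_eq_sub]
    have hcp := my_charpoly_conj T Ti N hTiT
    rw [hb, Matrix.charpoly_fromBlocks_zero₂₁] at hcp
    rw [← hre, ← hcp]
  have hdvd : q ∣ X ^ m * p := by
    rw [← h₂, hconj]; exact dvd_mul_right _ _
  by_cases hc : p ∣ q
  · obtain ⟨r, hr⟩ := hc
    have hr_monic : r.Monic := hp_monic.of_mul_monic_left (hr ▸ hq_monic)
    have hrdvd : r ∣ X ^ m := by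
      have h' : p * r ∣ p * X ^ m := by rw [← hr, mul_comm p (X ^ m)]; exact hdvd
      exact (mul_dvd_mul_iff_left hp_ne).mp h'
    obtain ⟨i, him, hassoc⟩ := (dvd_prime_pow Polynomial.prime_X m).mp hrdvd
    have hri : r = X ^ i :=
      Polynomial.eq_of_monic_of_associated hr_monic (Polynomial.monic_X_pow i) hassoc
    exact ⟨i, him, by rw [hr, hri, mul_comm]⟩
  · exfalso
    have hqX : q ∣ X ^ m := by
      refine UniqueFactorizationMonoid.dvd_of_dvd_mul_left_of_no_prime_factors
        hq_monic.ne_zero ?_ hdvd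
      intro d hdq hdp hd
      obtain ⟨u, hu⟩ := hdp
      rcases hp_irr.isUnit_or_isUnit hu with h | h
      · exact hd.not_unit h
      · refine hc (Dvd.dvd.trans ?_ hdq)
        exact (Associated.symm ⟨h.unit, by rw [IsUnit.unit_spec, ← hu]⟩).dvd
    obtain ⟨i, him, hassoc⟩ := (dvd_prime_pow Polynomial.prime_X m).mp hqX
    have hqXi : q = X ^ i :=
      Polynomial.eq_of_monic_of_associated hq_monic (Polynomial.monic_X_pow i) hassoc
    have hi : i = Fintype.card A := by
      have hd := Matrix.charpoly_natDegree_eq_dim M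
      rw [show M.charpoly = q from rfl, hqXi, natDegree_X_pow] at hd
      exact hd
    have hMn : M ^ Fintype.card A = 0 := by
      have hC := Matrix.aeval_self_charpoly M
      rw [show M.charpoly = q from rfl, hqXi, hi] at hC
      simpa using hC
    obtain ⟨n, hn⟩ := hprim
    rcases Nat.eq_zero_or_pos n with hn0 | hn1
    · subst hn0
      have hsub : ∀ a b : A, a = b := by
        intro a b; by_contra hab
        have h := hn a b
        rw [pow_zero] at h
        simp [Matrix.one_apply_ne hab] at h
      have hcardA : Fintype.card A = 1 := by
        have h1le : 1 ≤ Fintype.card A := Fintype.card_pos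
        have hle : Fintype.card A ≤ 1 := Fintype.card_le_one_iff.mpr fun a b => hsub a b
        omega
      have hM0 : M = 0 := by rw [← pow_one M, ← hcardA]; exact hMn
      have hno : ∀ (i' j : A₂), (τ₂ i').count j = 0 := by
        intro i' j
        have h0 : (τ (π i')).count (π j) = 0 := by
          have hz : ((τ (π i')).count (π j) : ℤ) = 0 := by
            rw [show ((τ (π i')).count (π j) : ℤ) = M (π i') (π j) from rfl, hM0]; rfl
          exact_mod_cast hz
        have hsum := hrel i' (π j)
        rw [h0] at hsum
        have hj : j ∈ Finset.univ.filter (fun j' => π j' = π j) := by simp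
        exact Finset.sum_eq_zero_iff.mp hsum j hj
      have hM₂0 : M₂ = 0 := by
        ext i' j
        show ((τ₂ i').count j : ℤ) = 0
        exact_mod_cast hno i' j
      rw [hM₂0, my_charpoly_zero] at h₂
      have hev := congrArg (Polynomial.aeval θ) h₂
      have hz : Polynomial.aeval θ p = 0 := minpoly.aeval ℤ θ
      rw [_root_.map_mul, map_pow, map_pow, Polynomial.aeval_X, hz, mul_zero] at hev
      have hpos : (0:ℝ) < θ ^ Fintype.card A₂ := pow_pos (lt_trans one_pos hθ.1) _
      rw [hev] at hpos; exact lt_irrefl 0 hpos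
    · have hpos : ∀ k : ℕ, 1 ≤ k → ∀ a b : A, 0 < (M ^ (k * n)) a b := by
        intro k hk
        induction k with
        | zero => omega
        | succ k ih =>
          rcases Nat.eq_zero_or_pos k with h0 | h1
          · subst h0; simpa using hn
          · intro a b
            have hsplit : M ^ ((k + 1) * n) = M ^ (k * n) * M ^ n := by
              rw [add_mul, one_mul, pow_add]
            rw [hsplit, Matrix.mul_apply]
            exact Finset.sum_pos (fun c _ => mul_pos (ih h1 a c) (hn c b)) (Finset.univ_nonempty_iff.mpr hA)
      have h0' : M ^ (Fintype.card A * n) = 0 := by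
        have hge : Fintype.card A ≤ Fintype.card A * n := le_mul_of_one_le_right (Nat.zero_le _) hn1
        have hsplit : Fintype.card A * n
            = Fintype.card A + (Fintype.card A * n - Fintype.card A) := by omega
        rw [hsplit, pow_add, hMn, zero_mul]
      obtain ⟨a⟩ := hA
      have hcontr := hpos (Fintype.card A) (Fintype.card_pos_iff.mpr ⟨a⟩) a a
      rw [h0'] at hcontr
      simp at hcontr
end

section
/- For the Thue–Morse substitution τ: 0 ↦ 01, 1 ↦ 10, the incidence matrix of τ has characteristic polynomial X(X − 2), while the incidence matrix of the induced length-2 sliding-block-code substitution τ₂ : 1 ↦ 12, 2 ↦ 31, 3 ↦ 34, 4 ↦ 13 (on the alphabet {1,2,3,4} encoding 01, 11, 10, 00) has characteristic polynomial X(X − 1)(X + 1)(X − 2). Hence the converse of the implication 'τ₂ ultimately Pisot ⟹ τ ultimately Pisot' fails for Thue–Morse in the sense that τ is ultimately Pisot while τ₂ is not. -/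
/-- A polynomial over `ℤ` is ultimately Pisot if it equals `X^m · P_θ(X)` for some Pisot
number `θ` and some `m ≥ 0`. -/
def UltimatelyPisot (p : Polynomial ℤ) : Prop :=
  ∃ (m : ℕ) (θ : ℝ), IsPisot θ ∧ p = Polynomial.X ^ m * minpoly ℤ θ

/-- The Thue–Morse substitution `0 ↦ 01, 1 ↦ 10`. -/
def tmSubst : Fin 2 → List (Fin 2) :=
  fun a => if a = 0 then [0, 1] else [1, 0]

/-- The induced length-2 sliding-block-code substitution of Thue–Morse,
`1 ↦ 12, 2 ↦ 31, 3 ↦ 34, 4 ↦ 13`, on the alphabet `{1, 2, 3, 4}` (encoded as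
`Fin 4 = {0, 1, 2, 3}`) encoding the length-2 factors `01, 11, 10, 00`. -/
def tmSubst2 : Fin 4 → List (Fin 4) :=
  fun a => if a = 0 then [0, 1] else if a = 1 then [2, 0] else if a = 2 then [2, 3] else [0, 2]


open Polynomial in
private lemma tm_minpoly_two : minpoly ℤ (2 : ℝ) = X - C 2 := by
  have h2 : (2 : ℝ) = algebraMap ℤ ℝ 2 := by norm_num
  rw [h2, minpoly.eq_X_sub_C_of_algebraMap_inj (2 : ℤ)
    (fun a b hab => by simpa using hab)]

open Polynomial in
private lemma tm_charpoly1 : (incidence tmSubst).charpoly = X * (X - C 2) := by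
  have h : incidence tmSubst = !![1,1;1,1] := by
    ext i j; fin_cases i <;> fin_cases j <;> rfl
  rw [h, Matrix.charpoly, Matrix.det_fin_two]
  simp [Matrix.charmatrix_apply_eq, Matrix.charmatrix_apply_ne]
  ring

open Polynomial in
private lemma tm_charpoly2 :
    (incidence tmSubst2).charpoly = X * (X - C 1) * (X + C 1) * (X - C 2) := by
  have h : (incidence tmSubst2).charmatrix =
      !![X-1, -1, 0, 0; -1, X, -1, 0; 0, 0, X-1, -1; -1, 0, -1, X] := by
    have h0 : incidence tmSubst2 = !![1,1,0,0;1,0,1,0;0,0,1,1;1,0,1,0] := by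
      ext i j; fin_cases i <;> fin_cases j <;> rfl
    rw [h0]
    ext i j
    fin_cases i <;> fin_cases j <;>
      simp [Matrix.charmatrix_apply_eq, Matrix.charmatrix_apply_ne,
        Matrix.vecHead, Matrix.vecTail]
  rw [Matrix.charpoly, h]
  simp [Matrix.det_succ_row_zero, Fin.sum_univ_succ, Fin.succAbove,
    Matrix.vecHead, Matrix.vecTail]
  ring

open Polynomial in
private lemma tm_up : UltimatelyPisot (X * (X - C 2)) := by
  refine ⟨1, 2, ⟨one_lt_two, ?_, ?_⟩, ?_⟩
  · have h2 : (2 : ℝ) = algebraMap ℤ ℝ 2 := by norm_num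
    rw [h2]; exact isIntegral_algebraMap
  · intro z hz hne
    rw [tm_minpoly_two] at hz
    simp [IsRoot, sub_eq_zero] at hz
    exact absurd (by simpa using hz) hne
  · rw [tm_minpoly_two]; ring

open Polynomial in
private lemma tm_nup : ¬ UltimatelyPisot (X * (X - C 1) * (X + C 1) * (X - C 2)) := by
  rintro ⟨m, θ, ⟨hθ1, _, hroots⟩, hp⟩
  have h1 : (minpoly ℤ θ).eval 1 = 0 := by
    have := congrArg (Polynomial.eval 1) hp
    simpa using this.symm
  have hroot : ((minpoly ℤ θ).map (Int.castRingHom ℂ)).IsRoot 1 := by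
    have := (Polynomial.IsRoot.map (f := Int.castRingHom ℂ) (x := 1) h1)
    simpa using this
  by_cases h : (1 : ℂ) = (θ : ℂ)
  · have hθ : θ = 1 := by exact_mod_cast h.symm
    exact absurd hθ hθ1.ne'
  · have := hroots 1 hroot (Ne.symm (fun he => h he.symm))
    simp at this

/-- The incidence matrix of Thue–Morse has characteristic polynomial `X(X - 2)`, an
ultimately Pisot polynomial, while the incidence matrix of its length-2 sliding-block-code
substitution has characteristic polynomial `X(X - 1)(X + 1)(X - 2)`, which is not
ultimately Pisot. Hence the converse of `τ₂ ultimately Pisot ⟹ τ ultimately Pisot` fails. -/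
theorem thueMorse_block2_not_ultimately_pisot :
    (incidence tmSubst).charpoly = Polynomial.X * (Polynomial.X - Polynomial.C 2) ∧
      (incidence tmSubst2).charpoly =
        Polynomial.X * (Polynomial.X - Polynomial.C 1) * (Polynomial.X + Polynomial.C 1) *
          (Polynomial.X - Polynomial.C 2) ∧
      UltimatelyPisot (incidence tmSubst).charpoly ∧
      ¬ UltimatelyPisot (incidence tmSubst2).charpoly := by
  refine ⟨tm_charpoly1, tm_charpoly2, ?_, ?_⟩
  · rw [tm_charpoly1]; exact tm_up
  · rw [tm_charpoly2]; exact tm_nup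
end
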